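/- For every initial value u⁰ ∈ S = [0,1]⁴ the ZIP regulatory system has a unique global solution: there exists exactly one differentiable function u : [0,∞) → ℝ⁴ with u(0) = u⁰ and u'(t) = F(u(t)) for all t ≥ 0, and this solution satisfies u(t) ∈ S for all t ≥ 0. -/

import Mathlib

open Set

/-- The ZIP regulatory vector field on ℝ⁴ (components indexed by `Fin 4`). -/
noncomputable def zipField (κ γ₁ γ₂ γ₃ f : ℝ) (u : Fin 4 → ℝ) : Fin 4 → ℝ :=
  ![κ * (u 2) ^ 2 * (1 - u 0) - u 0,
    u 0 * f - u 1,
    1 - γ₁ * u 2 * u 3 - u 2,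
    γ₂ * u 1 - γ₃ * u 2 * u 3 - (1 + γ₂ * u 1) * u 3]

/-! ### Auxiliary lemmas -/

section Aux

/-- clamp to `[0,1]` -/
noncomputable def zipClamp01 (x : ℝ) : ℝ := max 0 (min 1 x)

/-- clamp to `[-2,2]` -/
noncomputable def zipClamp2 (x : ℝ) : ℝ := max (-2) (min 2 x)

lemma zipClamp01_mem (x : ℝ) : zipClamp01 x ∈ Icc (0:ℝ) 1 :=
  ⟨le_max_left _ _, max_le zero_le_one (min_le_left _ _)⟩

lemma zipClamp01_of_mem {x : ℝ} (hx : x ∈ Icc (0:ℝ) 1) : zipClamp01 x = x := by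
  simp [zipClamp01, min_eq_right hx.2, max_eq_right hx.1]

lemma zipClamp01_of_nonpos {x : ℝ} (hx : x ≤ 0) : zipClamp01 x = 0 := by
  rw [zipClamp01, min_eq_right (hx.trans zero_le_one), max_eq_left hx]

lemma zipClamp01_of_one_le {x : ℝ} (hx : 1 ≤ x) : zipClamp01 x = 1 := by
  rw [zipClamp01, min_eq_left hx, max_eq_right zero_le_one]

lemma zipClamp01_lip (x y : ℝ) : |zipClamp01 x - zipClamp01 y| ≤ |x - y| := by
  unfold zipClamp01
  rw [max_comm 0 (min 1 x), max_comm 0 (min 1 y)]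
  calc |max (min 1 x) 0 - max (min 1 y) 0| ≤ |min 1 x - min 1 y| :=
        abs_max_sub_max_le_abs _ _ _
    _ ≤ max |1 - 1| |x - y| := abs_min_sub_min_le_max _ _ _ _
    _ ≤ |x - y| := by simp

lemma zipClamp01_abs_le (x : ℝ) : |zipClamp01 x| ≤ 2 := by
  have h := zipClamp01_mem x
  rw [abs_le]; exact ⟨by linarith [h.1], by linarith [h.2]⟩

lemma zipClamp2_abs_le (x : ℝ) : |zipClamp2 x| ≤ 2 := by
  rw [abs_le]
  exact ⟨le_max_left _ _, max_le (by norm_num) (min_le_left _ _)⟩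

lemma zipClamp2_of_abs_le {x : ℝ} (hx : |x| ≤ 2) : zipClamp2 x = x := by
  rw [abs_le] at hx
  rw [zipClamp2, min_eq_right hx.2, max_eq_right hx.1]

lemma zipClamp2_lip (x y : ℝ) : |zipClamp2 x - zipClamp2 y| ≤ |x - y| := by
  unfold zipClamp2
  rw [max_comm (-2) (min 2 x), max_comm (-2) (min 2 y)]
  calc |max (min 2 x) (-2) - max (min 2 y) (-2)| ≤ |min 2 x - min 2 y| :=
        abs_max_sub_max_le_abs _ _ _
    _ ≤ max |2 - 2| |x - y| := abs_min_sub_min_le_max _ _ _ _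
    _ ≤ |x - y| := by simp

lemma zip_abs_mul_le' {a b c d : ℝ} (h1 : |a| ≤ c) (h2 : |b| ≤ d) : |a * b| ≤ c * d := by
  rw [abs_mul]
  exact mul_le_mul h1 h2 (abs_nonneg _) ((abs_nonneg a).trans h1)

lemma zip_abs_mul_sub {a b c d M e₁ e₂ : ℝ} (ha : |a| ≤ M) (hd : |d| ≤ M)
    (h1 : |a - c| ≤ e₁) (h2 : |b - d| ≤ e₂) : |a * b - c * d| ≤ M * e₂ + M * e₁ := by
  rw [show a * b - c * d = a * (b - d) + d * (a - c) from by ring]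
  exact (abs_add_le _ _).trans (add_le_add (zip_abs_mul_le' ha h2) (zip_abs_mul_le' hd h1))

/-- The Lipschitz constant of the ZIP field on the box `[-2,2]⁴`. -/
noncomputable def zipK (κ γ₁ γ₂ γ₃ : ℝ) : ℝ := 33 * κ + 5 * γ₁ + 10 * γ₂ + 5 * γ₃ + 3

lemma zip_comp_bound (κ γ₁ γ₂ γ₃ f : ℝ) (hκ : 0 < κ) (hγ₁ : 0 < γ₁) (hγ₂ : 0 < γ₂)
    (hγ₃ : 0 < γ₃) (hf : f ∈ Set.Ico (0:ℝ) 1)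
    (x y : Fin 4 → ℝ) (hx : ∀ i, |x i| ≤ 2) (hy : ∀ i, |y i| ≤ 2)
    {d : ℝ} (hd0 : 0 ≤ d) (hdiff : ∀ i, |x i - y i| ≤ d) (i : Fin 4) :
    |zipField κ γ₁ γ₂ γ₃ f x i - zipField κ γ₁ γ₂ γ₃ f y i| ≤ zipK κ γ₁ γ₂ γ₃ * d := by
  have hsq : |(x 2)^2 - (y 2)^2| ≤ 2 * d + 2 * d := by
    rw [sq, sq]; exact zip_abs_mul_sub (hx 2) (hy 2) (hdiff 2) (hdiff 2)
  have h23 : |x 2 * x 3 - y 2 * y 3| ≤ 2 * d + 2 * d :=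
    zip_abs_mul_sub (hx 2) (hy 3) (hdiff 2) (hdiff 3)
  have h13 : |x 1 * x 3 - y 1 * y 3| ≤ 2 * d + 2 * d :=
    zip_abs_mul_sub (hx 1) (hy 3) (hdiff 1) (hdiff 3)
  have hsq2 : |(x 2)^2| ≤ 4 := by
    have := zip_abs_mul_le' (hx 2) (hx 2); rw [sq]; linarith
  have h1y0 : |1 - y 0| ≤ 4 := by
    have := hy 0; rw [abs_le] at *; constructor <;> linarith [this.1, this.2]
  have hd10 : |(1 - x 0) - (1 - y 0)| ≤ d := by
    rw [show (1 - x 0) - (1 - y 0) = -(x 0 - y 0) from by ring, abs_neg]; exact hdiff 0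
  have hP : |(x 2)^2 * (1 - x 0) - (y 2)^2 * (1 - y 0)| ≤ 4 * d + 4 * (2 * d + 2 * d) :=
    zip_abs_mul_sub hsq2 h1y0 hsq hd10
  fin_cases i
  · -- component 0
    show |(κ * x 2 ^ 2 * (1 - x 0) - x 0) - (κ * y 2 ^ 2 * (1 - y 0) - y 0)|
        ≤ zipK κ γ₁ γ₂ γ₃ * d
    rw [zipK]
    rw [show κ * x 2 ^ 2 * (1 - x 0) - x 0 - (κ * y 2 ^ 2 * (1 - y 0) - y 0)
        = κ * ((x 2)^2 * (1 - x 0) - (y 2)^2 * (1 - y 0)) + (y 0 - x 0) from by ring]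
    refine (abs_add_le _ _).trans ?_
    have h1 : |κ * ((x 2)^2 * (1 - x 0) - (y 2)^2 * (1 - y 0))| ≤ κ * (20 * d) := by
      rw [abs_mul, abs_of_pos hκ]
      exact mul_le_mul_of_nonneg_left (hP.trans (by linarith)) hκ.le
    have h2 : |y 0 - x 0| ≤ d := by rw [abs_sub_comm]; exact hdiff 0
    nlinarith [mul_nonneg hγ₁.le hd0, mul_nonneg hγ₂.le hd0, mul_nonneg hγ₃.le hd0,
      mul_nonneg hκ.le hd0]
  · -- component 1
    show |(x 0 * f - x 1) - (y 0 * f - y 1)| ≤ zipK κ γ₁ γ₂ γ₃ * d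
    rw [zipK]
    rw [show x 0 * f - x 1 - (y 0 * f - y 1) = (x 0 - y 0) * f + (y 1 - x 1) from by ring]
    refine (abs_add_le _ _).trans ?_
    have h1 : |(x 0 - y 0) * f| ≤ d * 1 :=
      zip_abs_mul_le' (hdiff 0) (by rw [abs_of_nonneg hf.1]; exact hf.2.le)
    have h2 : |y 1 - x 1| ≤ d := by rw [abs_sub_comm]; exact hdiff 1
    nlinarith [mul_nonneg hγ₁.le hd0, mul_nonneg hγ₂.le hd0, mul_nonneg hγ₃.le hd0,
      mul_nonneg hκ.le hd0]
  · -- component 2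
    show |(1 - γ₁ * x 2 * x 3 - x 2) - (1 - γ₁ * y 2 * y 3 - y 2)| ≤ zipK κ γ₁ γ₂ γ₃ * d
    rw [zipK]
    rw [show 1 - γ₁ * x 2 * x 3 - x 2 - (1 - γ₁ * y 2 * y 3 - y 2)
        = γ₁ * (y 2 * y 3 - x 2 * x 3) + (y 2 - x 2) from by ring]
    refine (abs_add_le _ _).trans ?_
    have h1 : |γ₁ * (y 2 * y 3 - x 2 * x 3)| ≤ γ₁ * (2 * d + 2 * d) := by
      rw [abs_mul, abs_of_pos hγ₁, abs_sub_comm]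
      exact mul_le_mul_of_nonneg_left h23 hγ₁.le
    have h2 : |y 2 - x 2| ≤ d := by rw [abs_sub_comm]; exact hdiff 2
    nlinarith [mul_nonneg hγ₂.le hd0, mul_nonneg hγ₃.le hd0, mul_nonneg hκ.le hd0,
      mul_nonneg hγ₁.le hd0]
  · -- component 3
    show |(γ₂ * x 1 - γ₃ * x 2 * x 3 - (1 + γ₂ * x 1) * x 3)
          - (γ₂ * y 1 - γ₃ * y 2 * y 3 - (1 + γ₂ * y 1) * y 3)| ≤ zipK κ γ₁ γ₂ γ₃ * d
    rw [zipK]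
    rw [show γ₂ * x 1 - γ₃ * x 2 * x 3 - (1 + γ₂ * x 1) * x 3
          - (γ₂ * y 1 - γ₃ * y 2 * y 3 - (1 + γ₂ * y 1) * y 3)
        = γ₂ * (x 1 - y 1) + γ₃ * (y 2 * y 3 - x 2 * x 3) + (y 3 - x 3)
          + γ₂ * (y 1 * y 3 - x 1 * x 3) from by ring]
    have hA : |γ₂ * (x 1 - y 1)| ≤ γ₂ * d := by
      rw [abs_mul, abs_of_pos hγ₂]; exact mul_le_mul_of_nonneg_left (hdiff 1) hγ₂.le
    have hB : |γ₃ * (y 2 * y 3 - x 2 * x 3)| ≤ γ₃ * (2 * d + 2 * d) := by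
      rw [abs_mul, abs_of_pos hγ₃, abs_sub_comm]; exact mul_le_mul_of_nonneg_left h23 hγ₃.le
    have hC : |y 3 - x 3| ≤ d := by rw [abs_sub_comm]; exact hdiff 3
    have hD : |γ₂ * (y 1 * y 3 - x 1 * x 3)| ≤ γ₂ * (2 * d + 2 * d) := by
      rw [abs_mul, abs_of_pos hγ₂, abs_sub_comm]; exact mul_le_mul_of_nonneg_left h13 hγ₂.le
    have htri := (abs_add_le (γ₂ * (x 1 - y 1) + γ₃ * (y 2 * y 3 - x 2 * x 3) + (y 3 - x 3))
        (γ₂ * (y 1 * y 3 - x 1 * x 3))).trans (add_le_add ((abs_add_le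
        (γ₂ * (x 1 - y 1) + γ₃ * (y 2 * y 3 - x 2 * x 3)) (y 3 - x 3)).trans (add_le_add
        ((abs_add_le (γ₂ * (x 1 - y 1)) (γ₃ * (y 2 * y 3 - x 2 * x 3))).trans
        (add_le_add hA hB)) hC)) hD)
    refine htri.trans ?_
    nlinarith [mul_nonneg hγ₂.le hd0, mul_nonneg hγ₃.le hd0, mul_nonneg hκ.le hd0,
      mul_nonneg hγ₁.le hd0]

lemma zip_lip_clamped (κ γ₁ γ₂ γ₃ f : ℝ) (hκ : 0 < κ) (hγ₁ : 0 < γ₁) (hγ₂ : 0 < γ₂)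
    (hγ₃ : 0 < γ₃) (hf : f ∈ Set.Ico (0:ℝ) 1)
    (σ : ℝ → ℝ) (hb : ∀ x, |σ x| ≤ 2) (hl : ∀ x y, |σ x - σ y| ≤ |x - y|) :
    LipschitzWith (zipK κ γ₁ γ₂ γ₃).toNNReal
      (fun u : Fin 4 → ℝ => zipField κ γ₁ γ₂ γ₃ f (fun i => σ (u i))) := by
  have hZK : (0:ℝ) ≤ zipK κ γ₁ γ₂ γ₃ := by unfold zipK; positivity
  apply LipschitzWith.of_dist_le_mul
  intro u v
  rw [Real.coe_toNNReal _ hZK]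
  rw [dist_pi_le_iff (mul_nonneg hZK dist_nonneg)]
  intro i
  rw [Real.dist_eq]
  refine zip_comp_bound κ γ₁ γ₂ γ₃ f hκ hγ₁ hγ₂ hγ₃ hf _ _ (fun j => hb (u j))
    (fun j => hb (v j)) dist_nonneg (fun j => (hl _ _).trans ?_) i
  rw [← Real.dist_eq]; exact dist_le_pi_dist u v j

lemma zip_norm_le (κ γ₁ γ₂ γ₃ f : ℝ) (hκ : 0 < κ) (hγ₁ : 0 < γ₁) (hγ₂ : 0 < γ₂)
    (hγ₃ : 0 < γ₃) (hf : f ∈ Set.Ico (0:ℝ) 1)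
    (x : Fin 4 → ℝ) (hx : ∀ i, x i ∈ Icc (0:ℝ) 1) :
    ‖zipField κ γ₁ γ₂ γ₃ f x‖ ≤ κ + γ₁ + 2 * γ₂ + γ₃ + 2 := by
  rw [pi_norm_le_iff_of_nonneg (by positivity)]
  intro i
  rw [Real.norm_eq_abs]
  have h0 := hx 0; have h1 := hx 1; have h2 := hx 2; have h3 := hx 3
  rw [mem_Icc] at h0 h1 h2 h3
  have hf0 := hf.1; have hf1 := hf.2
  fin_cases i
  · show |κ * x 2 ^ 2 * (1 - x 0) - x 0| ≤ _
    rw [abs_le]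
    constructor <;>
      nlinarith [mul_nonneg hκ.le (sq_nonneg (x 2)),
        mul_nonneg (mul_nonneg hκ.le (sq_nonneg (x 2))) (sub_nonneg.2 h0.2),
        mul_le_one₀ (show x 2 ^ 2 ≤ 1 by nlinarith) (by linarith : (0:ℝ) ≤ 1 - x 0) (by linarith),
        mul_le_mul_of_nonneg_left (show x 2 ^ 2 * (1 - x 0) ≤ 1 by
          nlinarith [mul_nonneg (sq_nonneg (x 2)) (sub_nonneg.2 h0.2)]) hκ.le]
  · show |x 0 * f - x 1| ≤ _
    rw [abs_le]
    constructor <;> nlinarith [mul_nonneg h0.1 hf0, mul_le_one₀ h0.2 hf0 hf1.le]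
  · show |1 - γ₁ * x 2 * x 3 - x 2| ≤ _
    rw [abs_le]
    constructor <;>
      nlinarith [mul_nonneg (mul_nonneg hγ₁.le h2.1) h3.1,
        mul_le_mul_of_nonneg_left (mul_le_one₀ h2.2 h3.1 h3.2) hγ₁.le]
  · show |γ₂ * x 1 - γ₃ * x 2 * x 3 - (1 + γ₂ * x 1) * x 3| ≤ _
    rw [abs_le]
    constructor <;>
      nlinarith [mul_nonneg (mul_nonneg hγ₂.le h1.1) h3.1,
        mul_nonneg (mul_nonneg hγ₃.le h2.1) h3.1, mul_nonneg hγ₂.le h1.1,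
        mul_le_mul_of_nonneg_left (mul_le_one₀ h2.2 h3.1 h3.2) hγ₃.le,
        mul_le_mul_of_nonneg_left (mul_le_one₀ h1.2 h3.1 h3.2) hγ₂.le,
        mul_le_mul_of_nonneg_left h1.2 hγ₂.le]

/-- Global existence for a bounded globally Lipschitz field. -/
lemma zip_global_exist {F : (Fin 4 → ℝ) → (Fin 4 → ℝ)} {K : NNReal} (hK : LipschitzWith K F)
    {C : ℝ} (hC0 : 0 ≤ C) (hC : ∀ x, ‖F x‖ ≤ C) (x0 : Fin 4 → ℝ) :
    ∃ u : ℝ → Fin 4 → ℝ, u 0 = x0 ∧ ∀ t, HasDerivAt u (F (u t)) t := by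
  have key : ∀ n : ℕ, ∃ α : ℝ → Fin 4 → ℝ, α 0 = x0 ∧
      ∀ t ∈ Ioo (-((n:ℝ)+1)) ((n:ℝ)+1), HasDerivAt α (F (α t)) t := by
    intro n
    have hn1 : (0:ℝ) ≤ (n:ℝ) + 1 := by positivity
    have hpl : IsPicardLindelof (tmin := -((n:ℝ)+1)) (tmax := (n:ℝ)+1) (fun _ x => F x)
        ⟨0, by constructor <;> linarith⟩ x0 ⟨C * ((n:ℝ)+1), mul_nonneg hC0 hn1⟩ 0 ⟨C, hC0⟩ K := {
      lipschitzOnWith := fun t _ => hK.lipschitzOnWith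
      continuousOn := fun x _ => continuousOn_const
      norm_le := fun t _ x _ => hC x
      mul_max_le := by
        show C * max (((n:ℝ)+1) - 0) (0 - -((n:ℝ)+1)) ≤ C * ((n:ℝ)+1) - 0
        rw [sub_zero, zero_sub, neg_neg, max_self, sub_zero]
    }
    obtain ⟨α, hα0, hαd⟩ := hpl.exists_eq_forall_mem_Icc_hasDerivWithinAt₀
    exact ⟨α, hα0, fun t ht =>
      (hαd t (Ioo_subset_Icc_self ht)).hasDerivAt (Icc_mem_nhds ht.1 ht.2)⟩
  choose α hα0 hαd using key
  have glue : ∀ n m : ℕ, ∀ t : ℝ, |t| < (n:ℝ)+1 → |t| < (m:ℝ)+1 → α n t = α m t := by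
    intro n m t h1 h2
    set c := min ((n:ℝ)+1) ((m:ℝ)+1) with hc
    have hc0 : 0 < c := lt_min (by positivity) (by positivity)
    have hsub1 : Ioo (-c) c ⊆ Ioo (-((n:ℝ)+1)) ((n:ℝ)+1) :=
      Ioo_subset_Ioo (neg_le_neg (min_le_left _ _)) (min_le_left _ _)
    have hsub2 : Ioo (-c) c ⊆ Ioo (-((m:ℝ)+1)) ((m:ℝ)+1) :=
      Ioo_subset_Ioo (neg_le_neg (min_le_right _ _)) (min_le_right _ _)
    have ht : t ∈ Ioo (-c) c := by
      rw [mem_Ioo, ← abs_lt]; exact lt_min h1 h2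
    exact ODE_solution_unique_of_mem_Ioo (v := fun _ x => F x) (s := fun _ => univ)
      (fun _ _ => hK.lipschitzOnWith) (mem_Ioo.2 ⟨neg_neg_iff_pos.2 hc0, hc0⟩)
      (fun s hs => ⟨hαd n s (hsub1 hs), mem_univ _⟩)
      (fun s hs => ⟨hαd m s (hsub2 hs), mem_univ _⟩)
      ((hα0 n).trans (hα0 m).symm) ht
  refine ⟨fun t => α ⌊|t|⌋₊ t, by simpa using hα0 0, fun t => ?_⟩
  set N := ⌊|t|⌋₊ with hN
  have hle : |t| < (N:ℝ) + 1 := Nat.lt_floor_add_one _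
  set ε := ((N:ℝ) + 1) - |t| with hε
  have hε0 : 0 < ε := by linarith
  have heq : EqOn (fun s => α ⌊|s|⌋₊ s) (α N) (Metric.ball t ε) := by
    intro s hs
    have hst : |s - t| < ε := by rwa [Metric.mem_ball, Real.dist_eq] at hs
    have hsN : |s| < (N:ℝ) + 1 := by
      calc |s| ≤ |s - t| + |t| := by simpa using abs_add_le (s - t) t
        _ < ε + |t| := by linarith
        _ = (N:ℝ) + 1 := by rw [hε]; ring
    exact glue _ _ s (Nat.lt_floor_add_one _) hsN
  have h1 : HasDerivAt (α N) (F (α N t)) t := hαd N t (mem_Ioo.2 (abs_lt.1 hle))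
  have h2 : (fun s => α ⌊|s|⌋₊ s) =ᶠ[nhds t] α N :=
    Filter.eventuallyEq_of_mem (Metric.ball_mem_nhds t hε0) heq
  have hut : α ⌊|t|⌋₊ t = α N t := rfl
  simpa [hut] using h1.congr_of_eventuallyEq h2

/-- Scalar forward invariance: if `g 0 ≥ 0` and the derivative is nonnegative whenever
`g ≤ 0` (at nonnegative times), then `g` stays nonnegative on `[0,∞)`. -/
lemma zip_invariant_nonneg {g g' : ℝ → ℝ} (hg : ∀ t, HasDerivAt g (g' t) t)
    (h0 : 0 ≤ g 0) (hstep : ∀ t, 0 ≤ t → g t ≤ 0 → 0 ≤ g' t) :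
    ∀ t, 0 ≤ t → 0 ≤ g t := by
  intro t₁ ht₁
  by_contra hneg
  push_neg at hneg
  have hcont : Continuous g := by
    rw [continuous_iff_continuousAt]; exact fun x => (hg x).continuousAt
  set A := {t : ℝ | t ∈ Icc 0 t₁ ∧ 0 ≤ g t} with hA
  have hA0 : (0:ℝ) ∈ A := ⟨⟨le_rfl, ht₁⟩, h0⟩
  have hAne : A.Nonempty := ⟨0, hA0⟩
  have hAbdd : BddAbove A := ⟨t₁, fun x hx => hx.1.2⟩
  have hAclosed : IsClosed A := by
    have : A = Icc 0 t₁ ∩ g ⁻¹' (Ici 0) := by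
      ext x
      constructor
      · rintro ⟨h1, h2⟩; exact ⟨h1, h2⟩
      · rintro ⟨h1, h2⟩; exact ⟨h1, h2⟩
    rw [this]
    exact isClosed_Icc.inter (isClosed_Ici.preimage hcont)
  set s := sSup A with hs
  have hsmem : s ∈ A := hAclosed.csSup_mem hAne hAbdd
  have hs0 : 0 ≤ s := le_csSup hAbdd hA0
  have hs1 : s ≤ t₁ := csSup_le hAne (fun x hx => hx.1.2)
  have hst : s < t₁ := by
    rcases eq_or_lt_of_le hs1 with h | h
    · exfalso; have := hsmem.2; rw [h] at this; linarith
    · exact h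
  have hneg' : ∀ x ∈ Ioc s t₁, g x ≤ 0 := by
    intro x hx
    by_contra h
    push_neg at h
    have hxA : x ∈ A := ⟨⟨hs0.trans hx.1.le, hx.2⟩, h.le⟩
    exact absurd (le_csSup hAbdd hxA) (not_le.2 hx.1)
  have hmono : MonotoneOn g (Icc s t₁) := by
    apply monotoneOn_of_deriv_nonneg (convex_Icc _ _) hcont.continuousOn
    · intro x _; exact (hg x).differentiableAt.differentiableWithinAt
    · intro x hx
      rw [interior_Icc] at hx
      rw [(hg x).deriv]
      exact hstep x (hs0.trans hx.1.le) (hneg' x ⟨hx.1, hx.2.le⟩)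
  have := hmono ⟨le_rfl, hst.le⟩ ⟨hst.le, le_rfl⟩ hst.le
  linarith [hsmem.2]

/-- Sign condition on the lower faces of the cube. -/
lemma zip_sign_lower (κ γ₁ γ₂ γ₃ f : ℝ) (hκ : 0 < κ) (hγ₁ : 0 < γ₁) (hγ₂ : 0 < γ₂)
    (hγ₃ : 0 < γ₃) (hf : f ∈ Set.Ico (0:ℝ) 1)
    (w : Fin 4 → ℝ) (hw : ∀ j, w j ∈ Icc (0:ℝ) 1) (i : Fin 4) (hwi : w i = 0) :
    0 ≤ zipField κ γ₁ γ₂ γ₃ f w i := by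
  have h0 := hw 0; have h1 := hw 1; have h2 := hw 2; have h3 := hw 3
  rw [mem_Icc] at h0 h1 h2 h3
  fin_cases i
  · show 0 ≤ κ * w 2 ^ 2 * (1 - w 0) - w 0
    have h : w 0 = 0 := hwi
    rw [h]
    nlinarith [mul_nonneg hκ.le (sq_nonneg (w 2))]
  · show 0 ≤ w 0 * f - w 1
    have h : w 1 = 0 := hwi
    rw [h]
    nlinarith [mul_nonneg h0.1 hf.1]
  · show 0 ≤ 1 - γ₁ * w 2 * w 3 - w 2
    have h : w 2 = 0 := hwi
    rw [h]
    nlinarith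
  · show 0 ≤ γ₂ * w 1 - γ₃ * w 2 * w 3 - (1 + γ₂ * w 1) * w 3
    have h : w 3 = 0 := hwi
    rw [h]
    nlinarith [mul_nonneg hγ₂.le h1.1]

/-- Sign condition on the upper faces of the cube. -/
lemma zip_sign_upper (κ γ₁ γ₂ γ₃ f : ℝ) (hκ : 0 < κ) (hγ₁ : 0 < γ₁) (hγ₂ : 0 < γ₂)
    (hγ₃ : 0 < γ₃) (hf : f ∈ Set.Ico (0:ℝ) 1)
    (w : Fin 4 → ℝ) (hw : ∀ j, w j ∈ Icc (0:ℝ) 1) (i : Fin 4) (hwi : w i = 1) :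
    zipField κ γ₁ γ₂ γ₃ f w i ≤ 0 := by
  have h0 := hw 0; have h1 := hw 1; have h2 := hw 2; have h3 := hw 3
  rw [mem_Icc] at h0 h1 h2 h3
  fin_cases i
  · show κ * w 2 ^ 2 * (1 - w 0) - w 0 ≤ 0
    have h : w 0 = 1 := hwi
    rw [h]
    nlinarith [mul_nonneg hκ.le (sq_nonneg (w 2))]
  · show w 0 * f - w 1 ≤ 0
    have h : w 1 = 1 := hwi
    rw [h]
    nlinarith [mul_le_one₀ h0.2 hf.1 hf.2.le]
  · show 1 - γ₁ * w 2 * w 3 - w 2 ≤ 0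
    have h : w 2 = 1 := hwi
    rw [h]
    nlinarith [mul_nonneg hγ₁.le h3.1]
  · show γ₂ * w 1 - γ₃ * w 2 * w 3 - (1 + γ₂ * w 1) * w 3 ≤ 0
    have h : w 3 = 1 := hwi
    rw [h]
    nlinarith [mul_nonneg hγ₃.le h2.1, mul_nonneg hγ₂.le h1.1]

end Aux

/-- for every initial value in the cube S = [0,1]⁴ the ZIP
regulatory system has a unique global solution on [0,∞), and it stays in S. -/
theorem zip_global_existence_uniqueness
    (κ γ₁ γ₂ γ₃ f : ℝ) (hκ : 0 < κ) (hγ₁ : 0 < γ₁) (hγ₂ : 0 < γ₂) (hγ₃ : 0 < γ₃)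
    (hf : f ∈ Set.Ico (0 : ℝ) 1)
    (u0 : Fin 4 → ℝ) (hu0 : ∀ i, u0 i ∈ Set.Icc (0 : ℝ) 1) :
    ∃ u : ℝ → Fin 4 → ℝ,
      (u 0 = u0 ∧ ∀ t ≥ (0 : ℝ), HasDerivAt u (zipField κ γ₁ γ₂ γ₃ f (u t)) t) ∧
      (∀ t ≥ (0 : ℝ), ∀ i, u t i ∈ Set.Icc (0 : ℝ) 1) ∧
      (∀ v : ℝ → Fin 4 → ℝ,
        (v 0 = u0 ∧ ∀ t ≥ (0 : ℝ), HasDerivAt v (zipField κ γ₁ γ₂ γ₃ f (v t)) t) →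
        ∀ t ≥ (0 : ℝ), v t = u t) := by
  -- clamped field G1 (clamp to [0,1]) : globally Lipschitz and bounded
  have hL1 := zip_lip_clamped κ γ₁ γ₂ γ₃ f hκ hγ₁ hγ₂ hγ₃ hf zipClamp01
    zipClamp01_abs_le zipClamp01_lip
  have hC1 : ∀ x : Fin 4 → ℝ,
      ‖zipField κ γ₁ γ₂ γ₃ f (fun i => zipClamp01 (x i))‖ ≤ κ + γ₁ + 2 * γ₂ + γ₃ + 2 :=
    fun x => zip_norm_le κ γ₁ γ₂ γ₃ f hκ hγ₁ hγ₂ hγ₃ hf _ (fun i => zipClamp01_mem _)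
  obtain ⟨u, hu0', hud⟩ := zip_global_exist hL1 (by positivity) hC1 u0
  -- invariance of the cube
  have hinv : ∀ t, 0 ≤ t → ∀ i, u t i ∈ Icc (0:ℝ) 1 := by
    have hlow : ∀ i, ∀ t, 0 ≤ t → 0 ≤ u t i := by
      intro i
      apply zip_invariant_nonneg
        (g' := fun t => zipField κ γ₁ γ₂ γ₃ f (fun j => zipClamp01 (u t j)) i)
      · exact fun t => hasDerivAt_pi.1 (hud t) i
      · rw [hu0']; exact (hu0 i).1
      · intro τ _ hle
        refine zip_sign_lower κ γ₁ γ₂ γ₃ f hκ hγ₁ hγ₂ hγ₃ hf _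
          (fun j => zipClamp01_mem _) i ?_
        exact zipClamp01_of_nonpos hle
    have hhigh : ∀ i, ∀ t, 0 ≤ t → u t i ≤ 1 := by
      intro i
      have key := zip_invariant_nonneg (g := fun t => 1 - u t i)
        (g' := fun t => -(zipField κ γ₁ γ₂ γ₃ f (fun j => zipClamp01 (u t j)) i))
        (fun t => (hasDerivAt_pi.1 (hud t) i).const_sub 1)
        (by show 0 ≤ 1 - u 0 i; rw [hu0']; linarith [(hu0 i).2])
        (by
          intro τ _ hle
          have hle' : 1 - u τ i ≤ 0 := hle
          have h1le : 1 ≤ u τ i := by linarith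
          have := zip_sign_upper κ γ₁ γ₂ γ₃ f hκ hγ₁ hγ₂ hγ₃ hf _
            (fun j => zipClamp01_mem _) i (zipClamp01_of_one_le h1le)
          show 0 ≤ -(zipField κ γ₁ γ₂ γ₃ f (fun j => zipClamp01 (u τ j)) i)
          linarith)
      intro t ht
      have h := key t ht
      have h' : 0 ≤ 1 - u t i := h
      linarith
    exact fun t ht i => ⟨hlow i t ht, hhigh i t ht⟩
  -- on the cube, the clamped field agrees with zipField
  have hud' : ∀ t, 0 ≤ t → HasDerivAt u (zipField κ γ₁ γ₂ γ₃ f (u t)) t := by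
    intro t ht
    have : (fun j => zipClamp01 (u t j)) = u t :=
      funext fun j => zipClamp01_of_mem (hinv t ht j)
    have h := hud t
    rwa [this] at h
  refine ⟨u, ⟨hu0', fun t ht => hud' t ht⟩, fun t ht i => hinv t ht i, ?_⟩
  -- uniqueness
  rintro v ⟨hv0, hvd⟩
  -- clamped field G2 (clamp to [-2,2])
  have hL2 := zip_lip_clamped κ γ₁ γ₂ γ₃ f hκ hγ₁ hγ₂ hγ₃ hf zipClamp2
    zipClamp2_abs_le zipClamp2_lip
  by_contra hcon
  push_neg at hcon
  obtain ⟨t₁, ht₁, hne⟩ := hcon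
  set D := {t : ℝ | 0 ≤ t ∧ v t ≠ u t} with hD
  have hDne : D.Nonempty := ⟨t₁, ht₁, hne⟩
  have hDbdd : BddBelow D := ⟨0, fun x hx => hx.1⟩
  set r := sInf D with hr
  have hr0 : 0 ≤ r := le_csInf hDne (fun x hx => hx.1)
  have hlt : ∀ t, 0 ≤ t → t < r → v t = u t := by
    intro t ht htr
    by_contra h
    exact absurd (csInf_le hDbdd ⟨ht, h⟩) (not_le.2 htr)
  have hvr : v r = u r := by
    rcases eq_or_lt_of_le hr0 with h | h
    · rw [← h, hv0, hu0']
    · have hcv : ContinuousAt v r := (hvd r hr0).continuousAt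
      have hcu : ContinuousAt u r := (hud r).continuousAt
      have h1 : Filter.Tendsto v (nhdsWithin r (Iio r)) (nhds (v r)) :=
        hcv.continuousWithinAt.tendsto
      have h2 : Filter.Tendsto u (nhdsWithin r (Iio r)) (nhds (u r)) :=
        hcu.continuousWithinAt.tendsto
      have hev : v =ᶠ[nhdsWithin r (Iio r)] u := by
        filter_upwards [Ioo_mem_nhdsLT_of_mem (show r ∈ Ioc (0:ℝ) r from ⟨h, le_rfl⟩)]
          with s hs
        exact hlt s hs.1.le hs.2
      exact tendsto_nhds_unique (h1.congr' hev) h2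
  -- choose a small forward interval where both solutions stay in the box [-2,2]⁴
  have hcv : ContinuousAt v r := (hvd r hr0).continuousAt
  have hcu : ContinuousAt u r := (hud r).continuousAt
  obtain ⟨δ₁, hδ₁, hv1⟩ := Metric.continuousAt_iff.1 hcv 1 one_pos
  obtain ⟨δ₂, hδ₂, hu1⟩ := Metric.continuousAt_iff.1 hcu 1 one_pos
  set δ := min δ₁ δ₂ / 2 with hδ
  have hδ0 : 0 < δ := by positivity
  have hbox : ∀ t ∈ Icc r (r + δ), (∀ i, |v t i| ≤ 2) ∧ (∀ i, |u t i| ≤ 2) := by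
    intro t ht
    have hdist : dist t r < min δ₁ δ₂ := by
      rw [Real.dist_eq, abs_of_nonneg (by linarith [ht.1])]
      have := lt_min hδ₁ hδ₂
      linarith [ht.2]
    have hurS := hinv r hr0
    constructor
    · intro i
      have h := hv1 (lt_of_lt_of_le hdist (min_le_left _ _))
      have hi : dist (v t i) (v r i) ≤ dist (v t) (v r) := dist_le_pi_dist _ _ i
      have habs : |v t i - v r i| < 1 := by
        rw [← Real.dist_eq]; exact lt_of_le_of_lt hi h
      have hvri : |v r i| ≤ 1 := by
        rw [hvr, abs_le]
        exact ⟨by linarith [(hurS i).1], (hurS i).2⟩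
      calc |v t i| ≤ |v t i - v r i| + |v r i| := by simpa using abs_add_le (v t i - v r i) (v r i)
        _ ≤ 2 := by linarith
    · intro i
      have h := hu1 (lt_of_lt_of_le hdist (min_le_right _ _))
      have hi : dist (u t i) (u r i) ≤ dist (u t) (u r) := dist_le_pi_dist _ _ i
      have habs : |u t i - u r i| < 1 := by
        rw [← Real.dist_eq]; exact lt_of_le_of_lt hi h
      have huri : |u r i| ≤ 1 := by
        rw [abs_le]; exact ⟨by linarith [(hurS i).1], (hurS i).2⟩
      calc |u t i| ≤ |u t i - u r i| + |u r i| := by simpa using abs_add_le (u t i - u r i) (u r i)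
        _ ≤ 2 := by linarith
  -- forward uniqueness with the globally Lipschitz field G2
  have hEq : EqOn v u (Icc r (r + δ)) := by
    apply ODE_solution_unique
      (v := fun _ x => zipField κ γ₁ γ₂ γ₃ f (fun i => zipClamp2 (x i)))
      (fun _ => hL2)
    · exact continuousOn_of_forall_continuousAt fun t ht => (hvd t (hr0.trans ht.1)).continuousAt
    · intro t ht
      have ht' : t ∈ Icc r (r + δ) := Ico_subset_Icc_self ht
      have h := hvd t (hr0.trans ht'.1)
      have : (fun i => zipClamp2 (v t i)) = v t :=
        funext fun i => zipClamp2_of_abs_le ((hbox t ht').1 i)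
      rw [← this] at h
      exact h.hasDerivWithinAt
    · exact continuousOn_of_forall_continuousAt fun t ht => (hud t).continuousAt
    · intro t ht
      have ht' : t ∈ Icc r (r + δ) := Ico_subset_Icc_self ht
      have h := hud' t (hr0.trans ht'.1)
      have : (fun i => zipClamp2 (u t i)) = u t :=
        funext fun i => zipClamp2_of_abs_le ((hbox t ht').2 i)
      rw [← this] at h
      exact h.hasDerivWithinAt
    · exact hvr
  have hlb : r + δ ≤ r := by
    rw [hr]
    apply le_csInf hDne
    intro x hx
    by_contra hxlt
    push_neg at hxlt
    have hxe : v x = u x := by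
      rcases lt_or_ge x r with h | h
      · exact hlt x hx.1 h
      · exact hEq ⟨h, hxlt.le⟩
    exact hx.2 hxe
  linarith
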